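/- Let I₀ be infinite and F ⊆ 𝒫(I₀) linearly ordered by inclusion. Call F discrete if no J ∈ F is an accumulation point of F \ {J}, where J is an accumulation point of G iff for every finite J₀ ⊆ I₀ infinitely many I ∈ G satisfy I ∩ J₀ = J ∩ J₀. If F is discrete, then F is the least generating set for Cl(F): for every G ⊆ Cl(F) with Cl(G) = Cl(F), we have F ⊆ G. -/
import Mathlib


/-- Combinatorial closure on families of index sets (Corollary 4.7 of the paper):
`J` is in the closure of `F` iff `J ∈ F` or for every finite `J₀` infinitely many
members of `F` agree with `J` on `J₀`. -/
def Cl {I₀ : Type*} (F : Set (Set I₀)) : Set (Set I₀) :=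
  F ∪ {J | ∀ J₀ : Finset I₀, {I ∈ F | I ∩ ↑J₀ = J ∩ ↑J₀}.Infinite}

/-- Proposition 4.8: if the chain `F` is discrete (no member is an accumulation
point of the others) then `F` is the least generating set for `Cl F`. -/
theorem discrete_least_generating {I₀ : Type*} [Infinite I₀]
    (F : Set (Set I₀)) (hchain : IsChain (· ⊆ ·) F)
    (hdiscrete : ∀ J ∈ F, ¬ ∀ J₀ : Finset I₀,
      {I ∈ F \ {J} | I ∩ ↑J₀ = J ∩ ↑J₀}.Infinite) :
    ∀ G ⊆ Cl F, Cl G = Cl F → F ⊆ G := by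
  intro G hG hCl J hJ
  have hJCl : J ∈ Cl G := by rw [hCl]; exact Or.inl hJ
  rcases hJCl with h | h
  · exact h
  · exfalso
    apply hdiscrete J hJ
    intro J₀
    have hinf : {I ∈ G | I ∩ ↑J₀ = J ∩ ↑J₀}.Infinite := h J₀
    by_cases hc : ∃ I ∈ G, I ∩ ↑J₀ = J ∩ ↑J₀ ∧ I ∉ F
    · obtain ⟨I, hIG, hIeq, hIF⟩ := hc
      have hICl : I ∈ Cl F := hG hIG
      rcases hICl with hI | hI
      · exact absurd hI hIF
      · have hinf' : {I' ∈ F | I' ∩ ↑J₀ = I ∩ ↑J₀}.Infinite := hI J₀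
        have hsub : {I' ∈ F | I' ∩ ↑J₀ = I ∩ ↑J₀} \ {J} ⊆
            {I' ∈ F \ {J} | I' ∩ ↑J₀ = J ∩ ↑J₀} := by
          rintro I' ⟨⟨hI'F, hI'eq⟩, hI'ne⟩
          exact ⟨⟨hI'F, hI'ne⟩, hI'eq.trans hIeq⟩
        exact ((hinf'.diff (Set.finite_singleton J)).mono hsub)
    · push_neg at hc
      have hsub : {I ∈ G | I ∩ ↑J₀ = J ∩ ↑J₀} \ {J} ⊆
          {I' ∈ F \ {J} | I' ∩ ↑J₀ = J ∩ ↑J₀} := by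
        rintro I ⟨⟨hIG, hIeq⟩, hIne⟩
        by_cases hIF : I ∈ F
        · exact ⟨⟨hIF, hIne⟩, hIeq⟩
        · exact absurd (hc I hIG hIeq) hIF
      exact ((hinf.diff (Set.finite_singleton J)).mono hsub)
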